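/- Let n ≥ 2, s = n/(n-1), c > 0, and let χ be a function with 0 ≤ χ_k ≤ 1. Fix φ(t) = exp(-(c log(1/t))^{1/s}), u = φ⁻¹. If a sequence (χ_k)_{k≥i₀} of indicator values satisfies Σ_{k=i₀}^{i}(1−χ_k)·2^{-k}u'(2^{-k})/u(2^{-k}) ≤ A·log(1/u(2^{-i})) for all large i, where A is small enough depending on n and c, then liminf_{i→∞} (1/i)·Σ_{k=i₀}^i χ_k ≥ 1/2. -/

import Mathlib

open Filter Set Real

/-- Counting lemma: a finset of positive naturals of cardinality `b` has
`∑ k^(s-1) ≥ (b/2)^s` when `s ≥ 1`. -/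
lemma stmt19_count (s : ℝ) (hs1 : 1 < s) (B : Finset ℕ) (hB : ∀ k ∈ B, 1 ≤ k) :
    ((B.card : ℝ) / 2) ^ s ≤ ∑ k ∈ B, (k : ℝ) ^ (s - 1) := by
  have hs0 : s ≠ 0 := by linarith
  rcases Nat.eq_zero_or_pos B.card with hb0 | hbpos
  · rw [hb0]
    simp only [Nat.cast_zero, zero_div, Real.zero_rpow hs0]
    exact Finset.sum_nonneg fun k _ => Real.rpow_nonneg (by positivity) _
  · set b := B.card with hbdef
    set m : ℕ := b - b / 2 with hmdef
    have hm1 : 1 ≤ m := by omega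
    have hmb : b / 2 + 1 = b - (m - 1) := by omega
    set B' := B.filter (fun k => m ≤ k) with hB'def
    have hcard_neg : (B.filter (fun k => ¬ m ≤ k)).card ≤ m - 1 := by
      have hsub : B.filter (fun k => ¬ m ≤ k) ⊆ Finset.Icc 1 (m - 1) := by
        intro k hk
        simp only [Finset.mem_filter, not_le] at hk
        exact Finset.mem_Icc.mpr ⟨hB k hk.1, by omega⟩
      calc (B.filter (fun k => ¬ m ≤ k)).card ≤ (Finset.Icc 1 (m-1)).card :=
            Finset.card_le_card hsub
        _ = m - 1 := by rw [Nat.card_Icc]; omega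
    have hcard' : b / 2 + 1 ≤ B'.card := by
      have hpn : B'.card + (B.filter (fun k => ¬ m ≤ k)).card = b := by
        rw [hB'def]
        exact Finset.card_filter_add_card_filter_not (s := B)
          (p := fun k => m ≤ k)
      omega
    -- real inequalities
    have hb2 : (0:ℝ) < (b:ℝ) / 2 := by
      have : (1:ℝ) ≤ (b:ℝ) := by exact_mod_cast hbpos
      linarith
    have hbm : (b:ℝ) / 2 ≤ (m:ℝ) := by
      have : (b:ℝ) / 2 ≤ b - b/2 := by
        have h1 : ((b/2 : ℕ) : ℝ) ≤ (b:ℝ)/2 := by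
          rw [le_div_iff₀ (by norm_num : (0:ℝ) < 2)]
          exact_mod_cast Nat.div_mul_le_self b 2
        have h2 : ((m:ℕ):ℝ) = (b:ℝ) - ((b/2 : ℕ):ℝ) := by
          rw [hmdef]; push_cast [Nat.cast_sub (Nat.div_le_self b 2)]; ring
        linarith [h2]
      calc (b:ℝ)/2 ≤ (b:ℝ) - (b:ℝ)/2 := by linarith
        _ ≤ (m:ℝ) := by
          have h1 : ((b/2 : ℕ) : ℝ) ≤ (b:ℝ)/2 := by
            rw [le_div_iff₀ (by norm_num : (0:ℝ) < 2)]
            exact_mod_cast Nat.div_mul_le_self b 2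
          have h2 : ((m:ℕ):ℝ) = (b:ℝ) - ((b/2 : ℕ):ℝ) := by
            rw [hmdef]; push_cast [Nat.cast_sub (Nat.div_le_self b 2)]; ring
          linarith
    have hbcard : (b:ℝ) / 2 ≤ (B'.card : ℝ) := by
      have h1 : ((b/2 : ℕ) : ℝ) + 1 ≤ (B'.card : ℝ) := by exact_mod_cast hcard'
      have h2 : (b:ℝ)/2 - 1 ≤ ((b/2 : ℕ) : ℝ) := by
        have hnat : b < (b/2 + 1) * 2 := by omega
        have : (b:ℝ) < (((b/2 : ℕ):ℝ) + 1) * 2 := by exact_mod_cast hnat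
        linarith
      linarith
    calc ((b:ℝ)/2) ^ s = ((b:ℝ)/2) ^ (1 + (s-1)) := by ring_nf
      _ = ((b:ℝ)/2) ^ (1:ℝ) * ((b:ℝ)/2) ^ (s-1) := by
          rw [Real.rpow_add hb2]
      _ = ((b:ℝ)/2) * ((b:ℝ)/2) ^ (s-1) := by rw [Real.rpow_one]
      _ ≤ (B'.card : ℝ) * ((m:ℝ)) ^ (s-1) := by
          apply mul_le_mul hbcard
          · exact Real.rpow_le_rpow hb2.le hbm (by linarith)
          · exact Real.rpow_nonneg hb2.le _
          · positivity
      _ = ∑ _k ∈ B', ((m:ℝ)) ^ (s-1) := by rw [Finset.sum_const, nsmul_eq_mul]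
      _ ≤ ∑ k ∈ B', (k : ℝ) ^ (s-1) := by
          apply Finset.sum_le_sum
          intro k hk
          have hmk : (m:ℝ) ≤ (k:ℝ) := by
            exact_mod_cast (Finset.mem_filter.mp hk).2
          exact Real.rpow_le_rpow (by positivity) hmk (by linarith)
      _ ≤ ∑ k ∈ B, (k : ℝ) ^ (s-1) := by
          apply Finset.sum_le_sum_of_subset_of_nonneg (Finset.filter_subset _ _)
          intro k _ _
          exact Real.rpow_nonneg (by positivity) _

theorem stmt19
    (n : ℕ) (hn : 2 ≤ n) (c : ℝ) (hc : 0 < c)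
    (s : ℝ) (hs : s = (n : ℝ) / (n - 1))
    (u : ℝ → ℝ)
    (hu_pos : ∀ t ∈ Ioo (0:ℝ) 1, 0 < u t ∧ u t < 1)
    (hu_inv : ∀ t ∈ Ioo (0:ℝ) 1,
      Real.exp (-(c * Real.log (1 / u t)) ^ (1 / s)) = t)
    (hu_diff : ∀ t ∈ Ioo (0:ℝ) 1, DifferentiableAt ℝ u t)
    (hu_deriv_pos : ∀ t ∈ Ioo (0:ℝ) 1, 0 < deriv u t)
    (hu_nondec : ∃ t₁ ∈ Ioo (0:ℝ) 1,
      MonotoneOn (fun t => u t / (t * deriv u t)) (Ioo 0 t₁))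
    (hu_sq : ∀ᶠ t in nhdsWithin 0 (Ioi 0),
      Real.log (1 / u (t ^ 2)) ≤ 2 ^ s * Real.log (1 / u t))
    (i₀ : ℕ) (hi₀ : 1 ≤ i₀) :
    ∃ A₀ > (0:ℝ), ∀ A, 0 < A → A ≤ A₀ →
      ∀ χ : ℕ → ℝ, (∀ k, χ k = 0 ∨ χ k = 1) →
        (∀ᶠ i : ℕ in atTop,
          ∑ k ∈ Finset.Icc i₀ i, (1 - χ k) * ((2:ℝ) ^ (-(k:ℝ)) *
              deriv u ((2:ℝ) ^ (-(k:ℝ))) / u ((2:ℝ) ^ (-(k:ℝ))))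
            ≤ A * Real.log (1 / u ((2:ℝ) ^ (-(i:ℝ))))) →
        (1 : ℝ) / 2 ≤
          Filter.liminf (fun i : ℕ => (∑ k ∈ Finset.Icc i₀ i, χ k) / i)
            atTop := by
  have hn1 : (1:ℝ) ≤ (n:ℝ) - 1 := by
    have : (2:ℝ) ≤ (n:ℝ) := by exact_mod_cast hn
    linarith
  have hs1 : 1 < s := by
    rw [hs, lt_div_iff₀ (by linarith)]
    linarith
  have hs0 : s ≠ 0 := by linarith
  have hspos : 0 < s := by linarith
  have hL : 0 < Real.log 2 := Real.log_pos one_lt_two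
  -- log formula for u
  have hlogu : ∀ t ∈ Ioo (0:ℝ) 1, Real.log (1 / u t) = (Real.log (1/t))^s / c := by
    intro t ht
    obtain ⟨hu0, hu1⟩ := hu_pos t ht
    have hX : 0 < Real.log (1 / u t) := by
      rw [one_div, Real.log_inv]
      linarith [Real.log_neg hu0 hu1]
    have h2 : -(c * Real.log (1/u t)) ^ (1/s) = Real.log t := by
      conv_rhs => rw [← hu_inv t ht]
      rw [Real.log_exp]
    have h3 : (c * Real.log (1/u t)) ^ (1/s) = Real.log (1/t) := by
      rw [one_div t, Real.log_inv]; linarith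
    have hcX : (0:ℝ) ≤ c * Real.log (1/u t) := by positivity
    have h4 : c * Real.log (1/u t) = (Real.log (1/t))^s := by
      rw [← h3, ← Real.rpow_mul hcX, one_div_mul_cancel hs0, Real.rpow_one]
    field_simp
    linarith [h4]
  -- explicit formula for u
  have hu_eq : ∀ t ∈ Ioo (0:ℝ) 1, u t = Real.exp (-((Real.log (1/t))^s / c)) := by
    intro t ht
    obtain ⟨hu0, _⟩ := hu_pos t ht
    have h1 := hlogu t ht
    rw [one_div, Real.log_inv] at h1
    rw [← Real.exp_log hu0]
    congr 1
    linarith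
  -- derivative formula
  have hderiv : ∀ t ∈ Ioo (0:ℝ) 1,
      deriv u t = u t * (s * (Real.log (1/t))^(s-1) / (c * t)) := by
    intro t ht
    have htpos := ht.1
    have hX : 0 < Real.log (1/t) := Real.log_pos (one_lt_one_div ht.1 ht.2)
    have h1 : HasDerivAt (fun x : ℝ => Real.log (1/x)) (-t⁻¹) t := by
      have h := (Real.hasDerivAt_log (ne_of_gt htpos)).neg
      have : (fun x : ℝ => Real.log (1/x)) = fun x => -Real.log x := by
        funext x; rw [one_div, Real.log_inv]
      rw [this]; exact h
    have h2 : HasDerivAt (fun x : ℝ => (Real.log (1/x))^s)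
        (s * (Real.log (1/t))^(s-1) * (-t⁻¹)) t := by
      have := (Real.hasDerivAt_rpow_const (p := s)
        (Or.inl (ne_of_gt hX))).comp t h1
      simpa [mul_comm, Function.comp_def] using this
    have h3 : HasDerivAt (fun x : ℝ => Real.exp (-((Real.log (1/x))^s / c)))
        (Real.exp (-((Real.log (1/t))^s / c)) *
          (-(s * (Real.log (1/t))^(s-1) * (-t⁻¹) / c))) t :=
      ((h2.div_const c).neg).exp
    have heq : u =ᶠ[nhds t] fun x => Real.exp (-((Real.log (1/x))^s / c)) := by
      filter_upwards [Ioo_mem_nhds ht.1 ht.2] with x hx using hu_eq x hx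
    rw [heq.deriv_eq, h3.deriv, ← hu_eq t ht]
    have htne : t ≠ 0 := ne_of_gt htpos
    congr 1
    field_simp
  -- the weight formula
  have hw : ∀ k : ℕ, 1 ≤ k →
      (2:ℝ) ^ (-(k:ℝ)) * deriv u ((2:ℝ) ^ (-(k:ℝ))) / u ((2:ℝ) ^ (-(k:ℝ)))
        = s * ((k:ℝ) * Real.log 2)^(s-1) / c := by
    intro k hk
    set t := (2:ℝ) ^ (-(k:ℝ)) with htdef
    have htpos : 0 < t := Real.rpow_pos_of_pos two_pos _
    have htlt : t < 1 := Real.rpow_lt_one_of_one_lt_of_neg one_lt_two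
      (neg_lt_zero.mpr (by exact_mod_cast hk : (0:ℝ) < (k:ℝ)))
    have htIoo : t ∈ Ioo (0:ℝ) 1 := ⟨htpos, htlt⟩
    have hlogt : Real.log (1/t) = (k:ℝ) * Real.log 2 := by
      rw [one_div, Real.log_inv, htdef, Real.log_rpow two_pos]
      ring
    have hupos := (hu_pos t htIoo).1
    rw [hderiv t htIoo, hlogt]
    field_simp
  -- choose A₀
  refine ⟨s * (1/8:ℝ)^s / Real.log 2, by positivity, ?_⟩
  intro A hA hAle χ hχ hsum
  have height : (1/8:ℝ)^s > 0 := Real.rpow_pos_of_pos (by norm_num) _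
  -- key eventual bound
  obtain ⟨N₁, hN₁⟩ := eventually_atTop.mp hsum
  have hEv : ∀ᶠ i : ℕ in atTop, (1:ℝ)/2 ≤ (∑ k ∈ Finset.Icc i₀ i, χ k) / i := by
    rw [eventually_atTop]
    refine ⟨max N₁ (4 * i₀), fun i hi => ?_⟩
    have hiN : N₁ ≤ i := le_trans (le_max_left _ _) hi
    have hi4 : 4 * i₀ ≤ i := le_trans (le_max_right _ _) hi
    have hii₀ : i₀ ≤ i := by omega
    have hi1 : 1 ≤ i := by omega
    have hipos : (0:ℝ) < (i:ℝ) := by exact_mod_cast hi1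
    set B := (Finset.Icc i₀ i).filter (fun k => χ k = 0) with hBdef
    set b := B.card with hbdef
    -- rewrite the weighted sum
    have hstep : ∀ k ∈ Finset.Icc i₀ i,
        (1 - χ k) * ((2:ℝ) ^ (-(k:ℝ)) * deriv u ((2:ℝ) ^ (-(k:ℝ))) /
          u ((2:ℝ) ^ (-(k:ℝ))))
        = if χ k = 0 then s * (Real.log 2)^(s-1) / c * (k:ℝ)^(s-1) else 0 := by
      intro k hk
      have hk1 : 1 ≤ k := le_trans hi₀ (Finset.mem_Icc.mp hk).1
      have hkpos : (0:ℝ) < (k:ℝ) := by exact_mod_cast hk1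
      have hwk := hw k hk1
      have hmr : ((k:ℝ) * Real.log 2)^(s-1) = (k:ℝ)^(s-1) * (Real.log 2)^(s-1) :=
        Real.mul_rpow hkpos.le hL.le
      rcases hχ k with h0 | h1
      · rw [if_pos h0, h0, hwk, hmr]; ring
      · rw [if_neg (by rw [h1]; norm_num), h1]; ring
    have hsum_eq : ∑ k ∈ Finset.Icc i₀ i, (1 - χ k) * ((2:ℝ) ^ (-(k:ℝ)) *
          deriv u ((2:ℝ) ^ (-(k:ℝ))) / u ((2:ℝ) ^ (-(k:ℝ))))
        = s * (Real.log 2)^(s-1) / c * ∑ k ∈ B, (k:ℝ)^(s-1) := by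
      rw [Finset.sum_congr rfl hstep, ← Finset.sum_filter, ← hBdef, Finset.mul_sum]
    -- RHS formula
    have htI : (2:ℝ) ^ (-(i:ℝ)) ∈ Ioo (0:ℝ) 1 := by
      constructor
      · positivity
      · exact Real.rpow_lt_one_of_one_lt_of_neg one_lt_two
          (neg_lt_zero.mpr (by exact_mod_cast hi1 : (0:ℝ) < (i:ℝ)))
    have hlogti : Real.log (1/(2:ℝ) ^ (-(i:ℝ))) = (i:ℝ) * Real.log 2 := by
      rw [one_div, Real.log_inv, Real.log_rpow two_pos]; ring
    have hRHS : Real.log (1 / u ((2:ℝ) ^ (-(i:ℝ))))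
        = (i:ℝ)^s * (Real.log 2)^s / c := by
      rw [hlogu _ htI, hlogti, Real.mul_rpow hipos.le hL.le]
    -- main inequality
    have hmain := hN₁ i hiN
    rw [hsum_eq, hRHS] at hmain
    have hcount : (((b:ℕ):ℝ)/2)^s ≤ ∑ k ∈ B, (k:ℝ)^(s-1) :=
      stmt19_count s hs1 B (fun k hk =>
        le_trans hi₀ (Finset.mem_Icc.mp (Finset.mem_filter.mp hk).1).1)
    have hKpos : 0 < s * (Real.log 2)^(s-1) / c := by positivity
    have hRpos : 0 < (Real.log 2)^(s-1) := Real.rpow_pos_of_pos hL _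
    -- derive (b/2)^s ≤ (A * log 2 / s) * i^s
    have h5 : (((b:ℕ):ℝ)/2)^s ≤ (A * Real.log 2 / s) * (i:ℝ)^s := by
      have hls : (Real.log 2)^s = (Real.log 2)^(s-1) * Real.log 2 := by
        rw [← Real.rpow_add_one (ne_of_gt hL) (s-1)]
        norm_num
      have hstep1 : s * (Real.log 2)^(s-1) / c * (((b:ℕ):ℝ)/2)^s
          ≤ A * ((i:ℝ)^s * ((Real.log 2)^(s-1) * Real.log 2) / c) := by
        calc s * (Real.log 2)^(s-1) / c * (((b:ℕ):ℝ)/2)^s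
            ≤ s * (Real.log 2)^(s-1) / c * ∑ k ∈ B, (k:ℝ)^(s-1) := by
              exact mul_le_mul_of_nonneg_left hcount hKpos.le
          _ ≤ A * ((i:ℝ)^s * (Real.log 2)^s / c) := hmain
          _ = A * ((i:ℝ)^s * ((Real.log 2)^(s-1) * Real.log 2) / c) := by rw [hls]
      set P := (((b:ℕ):ℝ)/2)^s with hPdef
      set Q := (i:ℝ)^s with hQdef
      set R := (Real.log 2)^(s-1) with hRdef
      set L := Real.log 2 with hLdef
      have h6 : s * R * P ≤ A * (Q * R * L) := by
        have h := mul_le_mul_of_nonneg_right hstep1 hc.le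
        have e1 : s * R / c * P * c = s * R * P := by field_simp
        have e2 : A * (Q * (R * L) / c) * c = A * (Q * R * L) := by
          field_simp
        linarith
      have h6' : s * P * R ≤ A * Q * L * R := by
        have e3 : s * P * R = s * R * P := by ring
        have e4 : A * Q * L * R = A * (Q * R * L) := by ring
        linarith
      have h7 : s * P ≤ A * Q * L := le_of_mul_le_mul_right h6' hRpos
      rw [div_mul_eq_mul_div, le_div_iff₀ hspos]
      have e5 : P * s = s * P := by ring
      have e6 : A * L * Q = A * Q * L := by ring
      linarith
    have h8 : (((b:ℕ):ℝ)/2)^s ≤ ((i:ℝ)/8)^s := by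
      have hA8 : A * Real.log 2 / s ≤ (1/8:ℝ)^s := by
        rw [div_le_iff₀ hspos]
        have hAL := mul_le_mul_of_nonneg_right hAle hL.le
        have e : s * (1/8:ℝ)^s / Real.log 2 * Real.log 2 = (1/8:ℝ)^s * s := by
          field_simp
        linarith
      calc (((b:ℕ):ℝ)/2)^s ≤ (A * Real.log 2 / s) * (i:ℝ)^s := h5
        _ ≤ (1/8:ℝ)^s * (i:ℝ)^s :=
            mul_le_mul_of_nonneg_right hA8 (Real.rpow_nonneg hipos.le s)
        _ = ((i:ℝ)/8)^s := by
            rw [← Real.mul_rpow (by norm_num) hipos.le]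
            congr 1
            ring
    have h9 : ((b:ℕ):ℝ)/2 ≤ (i:ℝ)/8 := by
      by_contra hcon
      push_neg at hcon
      exact absurd h8 (not_le.mpr (Real.rpow_lt_rpow (by positivity) hcon hspos))
    have hb_le : ((b:ℕ):ℝ) ≤ (i:ℝ)/4 := by linarith
    -- compute the sum of χ
    have hsumχ : ∑ k ∈ Finset.Icc i₀ i, χ k
        = ((Finset.Icc i₀ i).card : ℝ) - (b:ℝ) := by
      have hstep2 : ∀ k ∈ Finset.Icc i₀ i,
          χ k = 1 - (if χ k = 0 then (1:ℝ) else 0) := by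
        intro k _
        rcases hχ k with h | h <;> simp [h]
      rw [Finset.sum_congr rfl hstep2, Finset.sum_sub_distrib]
      have e1 : ∑ _k ∈ Finset.Icc i₀ i, (1:ℝ) = ((Finset.Icc i₀ i).card : ℝ) := by
        rw [Finset.sum_const, nsmul_eq_mul, mul_one]
      have e2 : ∑ k ∈ Finset.Icc i₀ i, (if χ k = 0 then (1:ℝ) else 0)
          = (b:ℝ) := by
        rw [← Finset.sum_filter, ← hBdef, Finset.sum_const, nsmul_eq_mul, mul_one,
          hbdef]
      rw [e1, e2]
    have hcardIcc : ((Finset.Icc i₀ i).card : ℝ) = (i:ℝ) + 1 - (i₀:ℝ) := by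
      rw [Nat.card_Icc, Nat.cast_sub (by omega : i₀ ≤ i + 1)]
      push_cast
      ring
    rw [le_div_iff₀ hipos, hsumχ, hcardIcc]
    have hi4' : (4:ℝ) * (i₀:ℝ) ≤ (i:ℝ) := by exact_mod_cast hi4
    have hi₀' : (1:ℝ) ≤ (i₀:ℝ) := by exact_mod_cast hi₀
    linarith
  -- conclude liminf
  refine le_liminf_of_le ?_ hEv
  apply isCoboundedUnder_ge_of_eventually_le atTop (x := (1:ℝ))
  rw [eventually_atTop]
  refine ⟨max i₀ 1, fun i hi => ?_⟩
  have hi1 : 1 ≤ i := le_trans (le_max_right _ _) hi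
  have hipos : (0:ℝ) < (i:ℝ) := by exact_mod_cast hi1
  rw [div_le_one hipos]
  calc ∑ k ∈ Finset.Icc i₀ i, χ k ≤ ∑ _k ∈ Finset.Icc i₀ i, (1:ℝ) := by
        apply Finset.sum_le_sum
        intro k _
        rcases hχ k with h | h <;> rw [h] <;> norm_num
    _ = ((Finset.Icc i₀ i).card : ℝ) := by rw [Finset.sum_const, nsmul_eq_mul, mul_one]
    _ ≤ (i:ℝ) := by
        rw [Nat.card_Icc]
        have : i + 1 - i₀ ≤ i := by omega
        exact_mod_cast this
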